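/- Let X = (X_t)_{t∈𝒯} be a stochastic process with values in a standard Borel space (𝒳, Σ) that is locally exchangeable with respect to a premetric d, let T ⊆ 𝒯 be a finite set, let 𝒢 be a subgroup of the group of bijections π : T → T, let S : 𝒳^T → ℝ be measurable, and let α ∈ [0,1]. Then ℙ( (1/|𝒢|) Σ_{π∈𝒢} 1[S(X_T) > S(X_{π,T})] − (1/|𝒢|) Σ_{π∈𝒢} Σ_{t∈T} d(t, π(t)) > 1 − α ) ≤ α, where X_T = (X_t)_{t∈T} and X_{π,T} = (X_{π(t)})_{t∈T}. -/

import Mathlib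

open MeasureTheory
open scoped ENNReal

/-- Total variation distance between two measures:
`sup_{A measurable} |μ(A) − ν(A)|`. -/
noncomputable def tvDist {𝒴 : Type*} [MeasurableSpace 𝒴] (μ ν : Measure 𝒴) : ℝ :=
  ⨆ A : {A : Set 𝒴 // MeasurableSet A}, |(μ A.1).toReal - (ν A.1).toReal|

theorem key_count {I : Type*} (G : Finset (Equiv.Perm I))
    (hmul : ∀ π ∈ G, ∀ π' ∈ G, π * π' ∈ G) (hinv : ∀ π ∈ G, π⁻¹ ∈ G)
    (v : Equiv.Perm I → ℝ) (θ : ℝ) (hθ : θ ≤ (G.card : ℝ)) :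
    ∑ π ∈ G, (if θ < ∑ σ ∈ G, (if v (π * σ) < v π then (1:ℝ) else 0) then (1:ℝ) else 0)
      ≤ (G.card : ℝ) - θ := by
  classical
  have hcnt : ∀ π ∈ G, (∑ σ ∈ G, (if v (π * σ) < v π then (1:ℝ) else 0))
      = ((G.filter (fun τ => v τ < v π)).card : ℝ) := by
    intro π hπ
    rw [Finset.sum_boole]
    congr 1
    apply Finset.card_nbij' (fun σ => π * σ) (fun τ => π⁻¹ * τ)
    · intro σ hσ
      simp only [Finset.mem_coe, Finset.mem_filter] at hσ ⊢
      exact ⟨hmul π hπ σ hσ.1, hσ.2⟩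
    · intro τ hτ
      simp only [Finset.mem_coe, Finset.mem_filter] at hτ ⊢
      refine ⟨hmul _ (hinv π hπ) τ hτ.1, ?_⟩
      rw [mul_inv_cancel_left]
      exact hτ.2
    · intro σ hσ; dsimp only; rw [inv_mul_cancel_left]
    · intro τ hτ; dsimp only; rw [mul_inv_cancel_left]
  rw [Finset.sum_boole]
  set K := G.filter (fun π => θ < ∑ σ ∈ G, (if v (π * σ) < v π then (1:ℝ) else 0)) with hKdef
  rcases K.eq_empty_or_nonempty with hK | hK
  · rw [hK]; simp; linarith
  · obtain ⟨π₀, hπ₀, hmin⟩ := K.exists_min_image v hK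
    have hπ₀G : π₀ ∈ G := (Finset.mem_filter.mp hπ₀).1
    have hπ₀θ : θ < ∑ σ ∈ G, (if v (π₀ * σ) < v π₀ then (1:ℝ) else 0) :=
      (Finset.mem_filter.mp hπ₀).2
    rw [hcnt π₀ hπ₀G] at hπ₀θ
    have hsub : G.filter (fun τ => v τ < v π₀) ⊆ G \ K := by
      intro τ hτ
      rw [Finset.mem_filter] at hτ
      rw [Finset.mem_sdiff]
      refine ⟨hτ.1, fun hτK => ?_⟩
      exact absurd (hmin τ hτK) (not_le.mpr hτ.2)
    have hKG : K ⊆ G := Finset.filter_subset _ _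
    have hcard : (G.filter (fun τ => v τ < v π₀)).card ≤ G.card - K.card := by
      calc _ ≤ (G \ K).card := Finset.card_le_card hsub
        _ = G.card - K.card := by rw [Finset.card_sdiff, Finset.inter_eq_left.mpr hKG]
    have hKle : K.card ≤ G.card := Finset.card_le_card hKG
    have : ((G.filter (fun τ => v τ < v π₀)).card : ℝ) ≤ (G.card : ℝ) - K.card := by
      have := Nat.cast_le (α := ℝ) |>.mpr hcard
      rwa [Nat.cast_sub hKle] at this
    linarith


/-- local randomization test: if `X` is locally exchangeable w.r.t.
the premetric `d`, `T ⊆ 𝒯` is finite, `𝒢` is a subgroup of the bijections of `T`,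
and `S` is a measurable test statistic, then for `α ∈ [0,1]`,
`ℙ( (1/|𝒢|) Σ_{π∈𝒢} 1[S(X_T) > S(X_{π,T})] − (1/|𝒢|) Σ_{π∈𝒢} Σ_{t∈T} d(t,π(t)) > 1−α ) ≤ α`. -/
theorem stmt10
    {Ω 𝒳 𝒯 : Type*} [MeasurableSpace Ω] [MeasurableSpace 𝒳] [StandardBorelSpace 𝒳]
    (ℙ : Measure Ω) [IsProbabilityMeasure ℙ]
    (X : 𝒯 → Ω → 𝒳) (hX : ∀ t, Measurable (X t))
    (d : 𝒯 → 𝒯 → ℝ)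
    (hd0 : ∀ t t', 0 ≤ d t t') (hd1 : ∀ t t', d t t' ≤ 1)
    (hdsymm : ∀ t t', d t t' = d t' t) (hdrefl : ∀ t, d t t = 0)
    (hexch : ∀ (T : Finset 𝒯) (π : 𝒯 → 𝒯), Set.InjOn π ↑T →
      tvDist (Measure.map (fun ω => fun t : T => X t.1 ω) ℙ)
             (Measure.map (fun ω => fun t : T => X (π t.1) ω) ℙ)
        ≤ ∑ t ∈ T, d t (π t))
    (T : Finset 𝒯)
    (G : Finset (Equiv.Perm {x // x ∈ T}))
    (hGone : 1 ∈ G) (hGmul : ∀ π ∈ G, ∀ π' ∈ G, π * π' ∈ G)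
    (hGinv : ∀ π ∈ G, π⁻¹ ∈ G)
    (S : ({x // x ∈ T} → 𝒳) → ℝ) (hS : Measurable S)
    (α : ℝ) (hα : α ∈ Set.Icc (0 : ℝ) 1) :
    ℙ {ω | 1 - α <
        (G.card : ℝ)⁻¹ * ∑ π ∈ G,
            (if S (fun t => X (π t).1 ω) < S (fun t => X t.1 ω) then (1 : ℝ) else 0)
          - (G.card : ℝ)⁻¹ * ∑ π ∈ G, ∑ t : {x // x ∈ T}, d t.1 (π t).1}
      ≤ ENNReal.ofReal α := by
  classical
  have hn : 0 < G.card := Finset.card_pos.mpr ⟨1, hGone⟩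
  have hn' : (0:ℝ) < (G.card : ℝ) := by exact_mod_cast hn
  set n : ℝ := (G.card : ℝ) with hndef
  set ε : Equiv.Perm {x // x ∈ T} → ℝ := fun π => ∑ t : {x // x ∈ T}, d t.1 (π t).1 with hε
  set Dsum : ℝ := ∑ π ∈ G, ε π with hDsumdef
  have hDsum0 : 0 ≤ Dsum := by
    refine Finset.sum_nonneg fun π _ => Finset.sum_nonneg fun t _ => hd0 _ _
  set θ : ℝ := (1 - α) * n + Dsum with hθdef
  set R : ({x // x ∈ T} → 𝒳) → ℝ :=
    fun y => ∑ σ ∈ G, (if S (fun t => y (σ t)) < S y then (1:ℝ) else 0) with hRdef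
  set B : Set ({x // x ∈ T} → 𝒳) := {y | θ < R y} with hBdef
  set g : Equiv.Perm {x // x ∈ T} → Ω → ({x // x ∈ T} → 𝒳) :=
    fun π ω => fun t => X (π t).1 ω with hgdef
  have hgm : ∀ π, Measurable (g π) := fun π => measurable_pi_lambda _ fun t => hX _
  have hRm : Measurable R := by
    apply Finset.measurable_sum
    intro σ _
    exact Measurable.ite
      (measurableSet_lt
        (hS.comp (measurable_pi_lambda _ fun t => measurable_pi_apply _)) hS)
      measurable_const measurable_const
  have hBm : MeasurableSet B := measurableSet_lt measurable_const hRm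
  have hiff : ∀ a : ℝ, 1 - α < n⁻¹ * a - n⁻¹ * Dsum → θ < a := by
    intro a h
    have h3 : (n⁻¹ * a - n⁻¹ * Dsum) * n = a - Dsum := by
      field_simp
    have h4 := mul_lt_mul_of_pos_right h hn'
    rw [h3] at h4
    rw [hθdef]; linarith
  -- main bound
  have hmain : ℙ (g 1 ⁻¹' B) ≤ ENNReal.ofReal α := by
    rcases le_or_gt Dsum (α * n) with hcase | hcase
    · -- interesting case: θ ≤ n
      have hθn : θ ≤ n := by rw [hθdef]; nlinarith
      -- Step A: TV comparison
      have hA : ∀ π ∈ G, (ℙ (g 1 ⁻¹' B)).toReal ≤ (ℙ (g π ⁻¹' B)).toReal + ε π := by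
        intro π hπ
        set πe : 𝒯 → 𝒯 := fun s => if h : s ∈ T then ((π ⟨s, h⟩ : {x // x ∈ T}) : 𝒯) else s
          with hπe
        have hπeT : ∀ (t : {x // x ∈ T}), πe t.1 = (π t).1 := by
          intro t; simp only [hπe]; rw [dif_pos t.2]
        have hinj : Set.InjOn πe ↑T := by
          intro a ha b hb hab
          rw [Finset.mem_coe] at ha hb
          simp only [hπe, dif_pos ha, dif_pos hb] at hab
          have := π.injective (Subtype.val_injective hab)
          exact congrArg Subtype.val this
        have htv := hexch T πe hinj
        have hgf : (fun ω => fun t : {x // x ∈ T} => X (πe t.1) ω) = g π := by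
          funext ω; funext t; rw [hπeT]
        have hgf1 : (fun ω => fun t : {x // x ∈ T} => X t.1 ω) = g 1 := by
          funext ω; funext t; rfl
        rw [hgf, hgf1] at htv
        have hsum : ∑ t ∈ T, d t (πe t) = ε π := by
          rw [hε]
          rw [← Finset.sum_attach T (fun t => d t (πe t))]
          rw [Finset.univ_eq_attach]
          refine Finset.sum_congr rfl fun t _ => ?_
          rw [hπeT]
        rw [hsum] at htv
        set μ := Measure.map (g 1) ℙ with hμdef
        set ν := Measure.map (g π) ℙ with hνdef
        haveI : IsProbabilityMeasure μ := Measure.isProbabilityMeasure_map (hgm 1).aemeasurable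
        haveI : IsProbabilityMeasure ν := Measure.isProbabilityMeasure_map (hgm π).aemeasurable
        have hbdd : BddAbove (Set.range fun A : {A : Set ({x // x ∈ T} → 𝒳) // MeasurableSet A}
            => |(μ A.1).toReal - (ν A.1).toReal|) := by
          refine ⟨1, ?_⟩
          rintro x ⟨A, rfl⟩
          have h1 : (μ A.1).toReal ≤ 1 := by
            have h := ENNReal.toReal_mono ENNReal.one_ne_top (prob_le_one (μ := μ) (s := A.1))
            simpa using h
          have h2 : (ν A.1).toReal ≤ 1 := by
            have h := ENNReal.toReal_mono ENNReal.one_ne_top (prob_le_one (μ := ν) (s := A.1))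
            simpa using h
          have h3 : 0 ≤ (μ A.1).toReal := ENNReal.toReal_nonneg
          have h4 : 0 ≤ (ν A.1).toReal := ENNReal.toReal_nonneg
          rw [abs_sub_le_iff]
          constructor <;> linarith
        have hle : |(μ B).toReal - (ν B).toReal| ≤ tvDist μ ν := by
          exact le_ciSup hbdd ⟨B, hBm⟩
        have hμB : μ B = ℙ (g 1 ⁻¹' B) := Measure.map_apply (hgm 1) hBm
        have hνB : ν B = ℙ (g π ⁻¹' B) := Measure.map_apply (hgm π) hBm
        rw [hμB, hνB] at hle
        have habs := le_abs_self ((ℙ (g 1 ⁻¹' B)).toReal - (ℙ (g π ⁻¹' B)).toReal)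
        linarith
      -- Step B: sum bound via key_count
      have hB2 : ∑ π ∈ G, ℙ (g π ⁻¹' B) ≤ ENNReal.ofReal (n - θ) := by
        have hAm : ∀ π, MeasurableSet (g π ⁻¹' B) := fun π => hgm π hBm
        calc ∑ π ∈ G, ℙ (g π ⁻¹' B)
            = ∑ π ∈ G, ∫⁻ ω, (g π ⁻¹' B).indicator (fun _ => (1:ℝ≥0∞)) ω ∂ℙ := by
              refine Finset.sum_congr rfl fun π _ => ?_
              rw [lintegral_indicator_const (hAm π), one_mul]
          _ = ∫⁻ ω, ∑ π ∈ G, (g π ⁻¹' B).indicator (fun _ => (1:ℝ≥0∞)) ω ∂ℙ := by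
              rw [lintegral_finset_sum]
              intro π _
              exact measurable_const.indicator (hAm π)
          _ ≤ ∫⁻ _, ENNReal.ofReal (n - θ) ∂ℙ := by
              refine lintegral_mono fun ω => ?_
              have hptw : ∀ π, (g π ⁻¹' B).indicator (fun _ => (1:ℝ≥0∞)) ω
                  = ENNReal.ofReal (if θ < R (g π ω) then (1:ℝ) else 0) := by
                intro π
                rw [Set.indicator_apply]
                by_cases h : θ < R (g π ω)
                · rw [if_pos, if_pos h, ENNReal.ofReal_one]
                  exact h
                · rw [if_neg, if_neg h, ENNReal.ofReal_zero]
                  exact h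
              have hsum1 : ∑ π ∈ G, (g π ⁻¹' B).indicator (fun _ => (1:ℝ≥0∞)) ω
                  = ENNReal.ofReal (∑ π ∈ G, (if θ < R (g π ω) then (1:ℝ) else 0)) := by
                rw [ENNReal.ofReal_sum_of_nonneg]
                · exact Finset.sum_congr rfl fun π _ => hptw π
                · intro π _; positivity
              rw [hsum1]
              apply ENNReal.ofReal_le_ofReal
              have hkey := key_count G hGmul hGinv (fun τ => S (fun t => X ((τ t) : {x // x ∈ T}).1 ω)) θ hθn
              have heq : ∀ π : Equiv.Perm {x // x ∈ T}, R (g π ω)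
                  = ∑ σ ∈ G, (if S (fun t => X ((π * σ) t).1 ω) < S (fun t => X (π t).1 ω)
                      then (1:ℝ) else 0) := by
                intro π
                simp only [hRdef, hgdef, Equiv.Perm.mul_apply]
                rfl
              calc ∑ π ∈ G, (if θ < R (g π ω) then (1:ℝ) else 0)
                  = ∑ π ∈ G, (if θ < ∑ σ ∈ G,
                      (if S (fun t => X ((π * σ) t).1 ω) < S (fun t => X (π t).1 ω)
                        then (1:ℝ) else 0) then (1:ℝ) else 0) := by
                    refine Finset.sum_congr rfl fun π _ => ?_
                    rw [heq π]
                _ ≤ n - θ := hkey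
          _ = ENNReal.ofReal (n - θ) := by
              rw [lintegral_const, measure_univ, mul_one]
      -- combine
      have hsumP : ∑ π ∈ G, (ℙ (g π ⁻¹' B)).toReal ≤ n - θ := by
        have h1 : (∑ π ∈ G, ℙ (g π ⁻¹' B)).toReal ≤ (ENNReal.ofReal (n - θ)).toReal :=
          ENNReal.toReal_mono ENNReal.ofReal_ne_top hB2
        rw [ENNReal.toReal_ofReal (by linarith : (0:ℝ) ≤ n - θ)] at h1
        rwa [ENNReal.toReal_sum (fun π _ => measure_ne_top ℙ _)] at h1
      have hchain : n * (ℙ (g 1 ⁻¹' B)).toReal ≤ (n - θ) + Dsum := by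
        have h1 : ∑ _π ∈ G, (ℙ (g 1 ⁻¹' B)).toReal = n * (ℙ (g 1 ⁻¹' B)).toReal := by
          rw [Finset.sum_const, nsmul_eq_mul, hndef]
        have h2 : ∑ π ∈ G, (ℙ (g 1 ⁻¹' B)).toReal
            ≤ ∑ π ∈ G, ((ℙ (g π ⁻¹' B)).toReal + ε π) :=
          Finset.sum_le_sum hA
        rw [Finset.sum_add_distrib] at h2
        rw [h1] at h2
        rw [hDsumdef]
        linarith
      have hfinal : (ℙ (g 1 ⁻¹' B)).toReal ≤ α := by
        have h1 : n * (ℙ (g 1 ⁻¹' B)).toReal ≤ α * n := by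
          rw [hθdef] at hchain; linarith
        have h2 : (ℙ (g 1 ⁻¹' B)).toReal * n ≤ α * n := by linarith
        exact le_of_mul_le_mul_right h2 hn'
      calc ℙ (g 1 ⁻¹' B) = ENNReal.ofReal ((ℙ (g 1 ⁻¹' B)).toReal) :=
            (ENNReal.ofReal_toReal (measure_ne_top _ _)).symm
        _ ≤ ENNReal.ofReal α := ENNReal.ofReal_le_ofReal hfinal
    · -- degenerate case: event is empty
      have hθn : n < θ := by rw [hθdef]; nlinarith
      have hRle : ∀ y, R y ≤ n - 1 := by
        intro y
        have h1 : R y ≤ ∑ σ ∈ G, (if σ = (1 : Equiv.Perm {x // x ∈ T}) then (0:ℝ) else 1) := by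
          refine Finset.sum_le_sum fun σ _ => ?_
          by_cases h : σ = 1
          · subst h
            simp
          · rw [if_neg h]
            split <;> norm_num
        have h2 : ∑ σ ∈ G, (if σ = (1 : Equiv.Perm {x // x ∈ T}) then (0:ℝ) else 1)
            = n - 1 := by
          have h3 : ∀ σ : Equiv.Perm {x // x ∈ T},
              (if σ = 1 then (0:ℝ) else 1) = 1 - (if σ = 1 then (1:ℝ) else 0) := by
            intro σ; split <;> ring
          rw [Finset.sum_congr rfl (fun σ _ => h3 σ), Finset.sum_sub_distrib,
            Finset.sum_const, Finset.sum_ite_eq' G (1 : Equiv.Perm {x // x ∈ T}) (fun _ => (1:ℝ)),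
            if_pos hGone, nsmul_eq_mul, mul_one, hndef]
        linarith
      have hempty : g 1 ⁻¹' B = ∅ := by
        ext ω
        simp only [Set.mem_preimage, hBdef, Set.mem_setOf_eq, Set.mem_empty_iff_false,
          iff_false, not_lt]
        linarith [hRle (g 1 ω)]
      rw [hempty, measure_empty]
      exact zero_le
  -- reduce the goal set to the preimage
  refine le_trans (measure_mono ?_) hmain
  intro ω hω
  simp only [Set.mem_setOf_eq] at hω
  simp only [Set.mem_preimage, hBdef, Set.mem_setOf_eq, hgdef, hRdef, Equiv.Perm.one_apply]
  exact hiff _ hω
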